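/- The class of rook graphs transduces the class of all graphs: there exists a transduction T (a finite set of colors together with a first-order formula φ(x,y) over the signature of colored graphs) such that every finite simple graph belongs to T(R) for some rook graph R. -/

import Mathlib

open FirstOrder

/-- Relation symbols of the language of graphs extended with `k` colors (unary predicates):
one binary adjacency relation and `k` unary color predicates. -/
inductive ColorRel (k : ℕ) : ℕ → Type
  | adj : ColorRel k 2
  | color : Fin k → ColorRel k 1

/-- The language of `k`-colored graphs. -/
def cgLang (k : ℕ) : Language :=
  ⟨fun _ => Empty, ColorRel k⟩

/-- The `k`-colored graph structure on `V` obtained from a graph `G` and colors `c`. -/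
def cgStructure {V : Type} (k : ℕ) (G : SimpleGraph V) (c : Fin k → Set V) :
    (cgLang k).Structure V where
  funMap := fun f _ => f.elim
  RelMap := fun r x =>
    match r with
    | ColorRel.adj => G.Adj (x 0) (x 1)
    | ColorRel.color i => x 0 ∈ c i

/-- A transduction: a finite set of colors (here of size `k`) together with a first-order
formula `φ(x,y)` over the language of `k`-colored graphs. -/
structure Transduction where
  k : ℕ
  φ : (cgLang k).Formula (Fin 2)

/-- `H ∈ T(G)`: there is a coloring `c` of `G` such that `H` is (isomorphic to) an induced
subgraph of the graph interpreted in the colored graph `(G, c)` by the formula `T.φ`,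
i.e. the graph on `V(G)` where distinct `u,v` are adjacent iff `φ(u,v)` or `φ(v,u)` holds. -/
def Transduction.mem {V W : Type} (T : Transduction) (G : SimpleGraph V)
    (H : SimpleGraph W) : Prop :=
  ∃ c : Fin T.k → Set V,
    Nonempty (H ↪g SimpleGraph.fromRel (fun u v : V =>
      letI := cgStructure T.k G c; T.φ.Realize ![u, v]))


/-- The rook graph on `{1,…,a} × {1,…,b}`: two distinct vertices are adjacent iff they
agree in the first or in the second coordinate. -/
def rookGraph (a b : ℕ) : SimpleGraph (Fin a × Fin b) :=
  SimpleGraph.fromRel (fun u v => u.1 = v.1 ∨ u.2 = v.2)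

-- auxiliary definitions for the proof
open Language

def colAt {n : ℕ} (i : Fin 3) (t : (cgLang 3).Term (Fin 2 ⊕ Fin n)) :
    (cgLang 3).BoundedFormula (Fin 2) n :=
  Relations.boundedFormula (ColorRel.color i) ![t]

def adjAt {n : ℕ} (t₁ t₂ : (cgLang 3).Term (Fin 2 ⊕ Fin n)) :
    (cgLang 3).BoundedFormula (Fin 2) n :=
  Relations.boundedFormula ColorRel.adj ![t₁, t₂]

def myφ : (cgLang 3).Formula (Fin 2) :=
  (colAt 0 (Term.var (Sum.inl 0))) ⊓ (colAt 0 (Term.var (Sum.inl 1))) ⊓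
  ((colAt 1 (Term.var (Sum.inr 0)) ⊓ colAt 2 (Term.var (Sum.inr 1)) ⊓
    adjAt (Term.var (Sum.inl 0)) (Term.var (Sum.inr 0)) ⊓
    adjAt (Term.var (Sum.inl 1)) (Term.var (Sum.inr 1)) ⊓
    adjAt (Term.var (Sum.inr 0)) (Term.var (Sum.inr 1))).ex.ex)

example {V : Type} (G : SimpleGraph V) (c : Fin 3 → Set V) (u v : V) :
    (letI := cgStructure 3 G c; myφ.Realize ![u, v]) ↔
    (u ∈ c 0 ∧ v ∈ c 0 ∧ ∃ z w : V, z ∈ c 1 ∧ w ∈ c 2 ∧ G.Adj u z ∧ G.Adj v w ∧ G.Adj z w) := by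
  letI := cgStructure 3 G c
  have hc : ∀ i (f : Fin 1 → V), Structure.RelMap (L := cgLang 3) (ColorRel.color i) f ↔ f 0 ∈ c i := fun _ _ => Iff.rfl
  have ha : ∀ (f : Fin 2 → V), Structure.RelMap (L := cgLang 3) ColorRel.adj f ↔ G.Adj (f 0) (f 1) := fun _ => Iff.rfl
  simp [myφ, colAt, adjAt, Formula.Realize, BoundedFormula.Realize, Relations.boundedFormula, hc, ha, Fin.snoc, and_assoc]

theorem rook_transduces_all_graphs :
    ∃ T : Transduction, ∀ (V : Type) [Fintype V] (G : SimpleGraph V),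
      ∃ a b : ℕ, T.mem (rookGraph a b) G := by
  refine ⟨⟨3, myφ⟩, ?_⟩
  intro V _ G
  set n := Fintype.card V with hn
  let e : V ≃ Fin n := Fintype.equivFin V
  refine ⟨n, n * n + 1, ?_⟩
  let col : Fin n × Fin n → Fin (n * n + 1) := fun p => (finProdFinEquiv p).succ
  have colinj : Function.Injective col := fun p q h => by
    exact finProdFinEquiv.injective (Fin.succ_inj.mp h)
  have colne : ∀ p, col p ≠ 0 := fun p => Fin.succ_ne_zero _
  let c : Fin 3 → Set (Fin n × Fin (n * n + 1)) :=
    ![{v | v.2 = 0},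
      {v | ∃ j, G.Adj (e.symm v.1) (e.symm j) ∧ v.2 = col (v.1, j)},
      {v | ∃ i, G.Adj (e.symm i) (e.symm v.1) ∧ v.2 = col (i, v.1)}]
  refine ⟨c, ⟨⟨⟨fun x => (e x, 0), fun x y h => e.injective (congrArg Prod.fst h)⟩, ?_⟩⟩⟩
  intro u v
  simp only [Function.Embedding.coeFn_mk]
  have hreal : ∀ x y : Fin n × Fin (n * n + 1),
      (letI := cgStructure 3 (rookGraph n (n * n + 1)) c; myφ.Realize ![x, y]) ↔
      (x ∈ c 0 ∧ y ∈ c 0 ∧ ∃ z w, z ∈ c 1 ∧ w ∈ c 2 ∧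
        (rookGraph n (n * n + 1)).Adj x z ∧ (rookGraph n (n * n + 1)).Adj y w ∧
        (rookGraph n (n * n + 1)).Adj z w) := by
    intro x y
    letI := cgStructure 3 (rookGraph n (n * n + 1)) c
    have hc : ∀ i (f : Fin 1 → Fin n × Fin (n * n + 1)), Structure.RelMap (L := cgLang 3) (ColorRel.color i) f ↔ f 0 ∈ c i := fun _ _ => Iff.rfl
    have ha : ∀ (f : Fin 2 → Fin n × Fin (n * n + 1)), Structure.RelMap (L := cgLang 3) ColorRel.adj f ↔ (rookGraph n (n * n + 1)).Adj (f 0) (f 1) := fun _ => Iff.rfl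
    simp [myφ, colAt, adjAt, Formula.Realize, BoundedFormula.Realize, Relations.boundedFormula, hc, ha, Fin.snoc, and_assoc]
  rw [SimpleGraph.fromRel_adj]
  -- key equivalence
  have key : ∀ p q : V, p ≠ q →
      ((letI := cgStructure 3 (rookGraph n (n * n + 1)) c;
        myφ.Realize ![(e p, (0 : Fin (n*n+1))), (e q, 0)]) → G.Adj p q) := by
    intro p q hpq h
    rw [hreal] at h
    obtain ⟨-, -, z, w, ⟨j, hzadj, hzcol⟩, ⟨i, hwadj, hwcol⟩, hxz, hyw, hzw⟩ := h
    rw [rookGraph, SimpleGraph.fromRel_adj] at hxz hyw hzw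
    have hz1 : z.1 = e p := by
      rcases hxz.2 with (h | h) | (h | h)
      · exact h.symm
      · exact absurd (hzcol ▸ h.symm) (colne _)
      · exact h
      · exact absurd (hzcol ▸ h) (colne _)
    have hw1 : w.1 = e q := by
      rcases hyw.2 with (h | h) | (h | h)
      · exact h.symm
      · exact absurd (hwcol ▸ h.symm) (colne _)
      · exact h
      · exact absurd (hwcol ▸ h) (colne _)
    have hne : z.1 ≠ w.1 := by
      rw [hz1, hw1]; exact fun h => hpq (e.injective h)
    have hcol : z.2 = w.2 := by
      rcases hzw.2 with (h | h) | (h | h)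
      · exact absurd h hne
      · exact h
      · exact absurd h.symm hne
      · exact h.symm
    have : col (z.1, j) = col (i, w.1) := by rw [← hzcol, ← hwcol, hcol]
    have hpair := colinj this
    have h1 : z.1 = i := congrArg Prod.fst hpair
    have h2 : j = w.1 := congrArg Prod.snd hpair
    have : G.Adj (e.symm (e p)) (e.symm (e q)) := by
      rw [← hz1, ← hw1, ← h2]; exact hzadj
    simpa using this
  rw [Iff.comm]
  constructor
  · intro hadj
    have hpq : u ≠ v := G.ne_of_adj hadj
    constructor
    · intro h
      exact hpq (e.injective (congrArg Prod.fst h))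
    · left
      rw [hreal]
      refine ⟨rfl, rfl, (e u, col (e u, e v)), (e v, col (e u, e v)), ?_, ?_, ?_, ?_, ?_⟩
      · exact ⟨e v, by simpa using hadj, rfl⟩
      · exact ⟨e u, by simpa using hadj, rfl⟩
      · rw [rookGraph, SimpleGraph.fromRel_adj]
        exact ⟨fun h => colne (e u, e v) (congrArg Prod.snd h).symm, Or.inl (Or.inl rfl)⟩
      · rw [rookGraph, SimpleGraph.fromRel_adj]
        exact ⟨fun h => colne (e u, e v) (congrArg Prod.snd h).symm, Or.inl (Or.inl rfl)⟩
      · rw [rookGraph, SimpleGraph.fromRel_adj]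
        exact ⟨fun h => hpq (e.injective (congrArg Prod.fst h)), Or.inl (Or.inr rfl)⟩
  · rintro ⟨hne, h | h⟩
    · exact key u v (fun h' => hne (by rw [h'])) h
    · exact (key v u (fun h' => hne (by rw [h'])) h).symm
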